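/- For n ∈ ℕ and x ∈ [0,1], the pointwise limit as c → 0 of p_{n,k}^{[c]}(x) equals (n x)^k e^{-n x}/k!, i.e., lim_{c→0} C(-n/c,k)(-c x)^k (1+c x)^{-n/c-k} = (n x)^k e^{-n x}/k!. -/

import Mathlib

/-- Generalized binomial coefficient `C(a,k) = a(a-1)⋯(a-k+1)/k!`. -/
noncomputable def genChoose (a : ℝ) (k : ℕ) : ℝ :=
  (∏ i ∈ Finset.range k, (a - i)) / (Nat.factorial k)

lemma aux_log (x : ℝ) :
    Filter.Tendsto (fun c : ℝ => Real.log (1 + c * x) / c)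
      (nhdsWithin 0 {0}ᶜ) (nhds x) := by
  have h1 : HasDerivAt (fun c : ℝ => 1 + c * x) x 0 := by
    simpa using ((hasDerivAt_id (0:ℝ)).mul_const x).const_add 1
  have h2 : HasDerivAt (fun c : ℝ => Real.log (1 + c * x)) x 0 := by
    have := h1.log (by norm_num)
    simpa using this
  have h3 := hasDerivAt_iff_tendsto_slope.mp h2
  refine h3.congr (fun c => ?_)
  simp [slope_def_field, div_eq_inv_mul]

theorem stmt_2 (n x : ℝ) (hn : 0 < n) (hx : 0 ≤ x) (k : ℕ) :
    Filter.Tendsto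
      (fun c : ℝ => genChoose (-n / c) k * (-c * x) ^ k * (1 + c * x) ^ (-n / c - k))
      (nhdsWithin 0 {0}ᶜ)
      (nhds ((n * x) ^ k * Real.exp (-(n * x)) / (Nat.factorial k))) := by
  set g := fun c : ℝ => (∏ i ∈ Finset.range k, (n * x + i * (c * x))) / (Nat.factorial k) *
    Real.exp ((-n) * (Real.log (1 + c * x) / c) - k * Real.log (1 + c * x)) with hg
  have hpos : ∀ᶠ c : ℝ in nhds 0, 0 < 1 + c * x := by
    have ht : Filter.Tendsto (fun c : ℝ => 1 + c * x) (nhds 0) (nhds 1) := by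
      have : Continuous (fun c : ℝ => 1 + c * x) := by fun_prop
      simpa using this.tendsto 0
    exact ht.eventually (eventually_gt_nhds (by norm_num))
  have heq : (fun c : ℝ => genChoose (-n / c) k * (-c * x) ^ k * (1 + c * x) ^ (-n / c - k))
      =ᶠ[nhdsWithin 0 {0}ᶜ] g := by
    filter_upwards [self_mem_nhdsWithin, Filter.eventually_iff_exists_mem.mpr
      ⟨_, nhdsWithin_le_nhds hpos, fun c h => h⟩] with c hc hcpos
    have hc0 : c ≠ 0 := hc
    have hrpow : (1 + c * x) ^ (-n / c - (k : ℝ)) =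
        Real.exp ((-n) * (Real.log (1 + c * x) / c) - k * Real.log (1 + c * x)) := by
      rw [Real.rpow_def_of_pos hcpos]
      congr 1
      field_simp
    have hprod : genChoose (-n / c) k * (-c * x) ^ k =
        (∏ i ∈ Finset.range k, (n * x + i * (c * x))) / (Nat.factorial k) := by
      rw [genChoose, div_mul_eq_mul_div]
      congr 1
      rw [show ((-c) * x) ^ k = ∏ _i ∈ Finset.range k, ((-c) * x) by
        simp [Finset.prod_const], ← Finset.prod_mul_distrib]
      refine Finset.prod_congr rfl (fun i _ => ?_)
      field_simp
      ring
    simp only [hg]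
    rw [hprod, hrpow]
  refine Filter.Tendsto.congr' heq.symm ?_
  have hL := aux_log x
  have hlog : Filter.Tendsto (fun c : ℝ => Real.log (1 + c * x)) (nhdsWithin 0 {0}ᶜ) (nhds 0) := by
    have hcont : ContinuousAt (fun c : ℝ => Real.log (1 + c * x)) 0 := by
      exact (Real.continuousAt_log (by norm_num)).comp (by fun_prop)
    have h2 : Filter.Tendsto (fun c : ℝ => Real.log (1 + c * x)) (nhdsWithin 0 {0}ᶜ)
        (nhds (Real.log (1 + 0 * x))) := hcont.tendsto.mono_left nhdsWithin_le_nhds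
    simpa using h2
  have hprodlim : Filter.Tendsto (fun c : ℝ => ∏ i ∈ Finset.range k, (n * x + i * (c * x)))
      (nhdsWithin 0 {0}ᶜ) (nhds ((n * x) ^ k)) := by
    have : Filter.Tendsto (fun c : ℝ => ∏ i ∈ Finset.range k, (n * x + i * (c * x)))
        (nhdsWithin 0 {0}ᶜ) (nhds (∏ i ∈ Finset.range k, (n * x + i * ((0:ℝ) * x)))) := by
      refine Filter.Tendsto.mono_left ?_ nhdsWithin_le_nhds
      exact (Continuous.tendsto (by fun_prop) 0)
    simpa using this
  have hexp : Filter.Tendsto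
      (fun c : ℝ => Real.exp ((-n) * (Real.log (1 + c * x) / c) - k * Real.log (1 + c * x)))
      (nhdsWithin 0 {0}ᶜ) (nhds (Real.exp (-(n * x)))) := by
    have h1 : Filter.Tendsto (fun c : ℝ => (-n) * (Real.log (1 + c * x) / c) - k * Real.log (1 + c * x))
        (nhdsWithin 0 {0}ᶜ) (nhds ((-n) * x - k * 0)) :=
      ((hL.const_mul (-n)).sub (hlog.const_mul (k : ℝ)))
    have := (Real.continuous_exp.tendsto _).comp h1
    simpa [Function.comp_def] using this
  have := (hprodlim.div_const (Nat.factorial k : ℝ)).mul hexp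
  convert this using 2
  ring
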